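/- Bound on the conditioned walk's midpoint distribution: there exist c₂, b₂, ε₀ > 0 such that for every integer n ≥ 2, every integer m with |2m - n| ≤ 1, every z ∈ L_n with |z| ≤ ε₀ n, and every w ∈ Z, P{S_m = w | S_n = z} ≤ c₂ n^{-1/2} exp{ -b₂ (w - z/2)² / n }. -/

import Mathlib

set_option maxHeartbeats 1000000

open Finset
/-- Position after the first `k` steps of a `±1` walk encoded by `f`. -/
def walkSum (n : ℕ) (f : Fin n → Bool) (k : ℕ) : ℤ :=
  ∑ i ∈ Finset.univ.filter (fun i : Fin n => (i : ℕ) < k), (if f i then (1 : ℤ) else -1)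
lemma card_lt (n r : ℕ) (h : r ≤ n) :
    (univ.filter fun i : Fin n => (i : ℕ) < r).card = r := by
  have : (univ.filter fun i : Fin n => (i : ℕ) < r)
      = Finset.map (Fin.castLEEmb h) univ := by
    ext i
    simp only [mem_filter, mem_univ, true_and, Finset.mem_map, Fin.castLEEmb]
    constructor
    · intro hi; exact ⟨⟨(i : ℕ), hi⟩, by simp [Fin.castLE]⟩
    · rintro ⟨a, rfl⟩; simpa using a.isLt
  rw [this, Finset.card_map, Finset.card_univ, Fintype.card_fin]
lemma walkSum_eq (n r : ℕ) (h : r ≤ n) (f : Fin n → Bool) :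
    walkSum n f r
      = 2 * ((univ.filter fun i : Fin n => f i ∧ (i : ℕ) < r).card : ℤ) - r := by
  have h1 : ∀ i : Fin n, (if f i then (1:ℤ) else -1) = 2 * (if f i then (1:ℤ) else 0) - 1 := by
    intro i; by_cases hf : f i <;> simp [hf]
  rw [walkSum]
  rw [Finset.sum_congr rfl (fun i _ => h1 i), Finset.sum_sub_distrib, ← Finset.mul_sum]
  rw [Finset.sum_boole, Finset.sum_const, card_lt n r h]
  have h2 : (univ.filter fun i : Fin n => (i : ℕ) < r).filter (fun i => (f i : Prop))
      = univ.filter fun i : Fin n => f i ∧ (i : ℕ) < r := by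
    rw [Finset.filter_filter]
    exact Finset.filter_congr (by intro i _; tauto)
  rw [h2]
  push_cast
  ring
lemma count_pair (n m j k : ℕ) (hm : m ≤ n) (hjk : j ≤ k) :
    (univ.filter fun f : Fin n → Bool =>
        ((univ.filter fun i => f i ∧ (i : ℕ) < m).card = j ∧
         (univ.filter fun i : Fin n => (f i : Prop)).card = k)).card
      = m.choose j * (n - m).choose (k - j) := by
  classical
  set S : Finset (Fin n) := univ.filter (fun i : Fin n => (i : ℕ) < m) with hS
  set T : Finset (Fin n) := univ.filter (fun i : Fin n => ¬ (i : ℕ) < m) with hT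
  have hScard : S.card = m := by
    rw [hS]
    have : (univ.filter fun i : Fin n => (i : ℕ) < m)
        = Finset.map (Fin.castLEEmb hm) univ := by
      ext i
      simp only [mem_filter, mem_univ, true_and, Finset.mem_map, Fin.castLEEmb]
      constructor
      · intro hi; exact ⟨⟨(i : ℕ), hi⟩, by simp [Fin.castLE]⟩
      · rintro ⟨a, rfl⟩; simpa using a.isLt
    rw [this, Finset.card_map, Finset.card_univ, Fintype.card_fin]
  have hTcard : T.card = n - m := by
    have := Finset.card_filter_add_card_filter_not
      (s := (univ : Finset (Fin n))) (fun i : Fin n => (i : ℕ) < m)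
    rw [Finset.card_univ, Fintype.card_fin] at this
    have h3 : S.card = m := hScard
    rw [hS] at h3
    rw [hT]
    omega
  rw [show m.choose j * (n-m).choose (k-j)
      = (S.powersetCard j ×ˢ T.powersetCard (k - j)).card by
    rw [Finset.card_product, Finset.card_powersetCard, Finset.card_powersetCard,
      hScard, hTcard]]
  apply Finset.card_bij'
    (i := fun f _ => (univ.filter (fun i : Fin n => f i ∧ (i : ℕ) < m),
                      univ.filter (fun i : Fin n => f i ∧ ¬ (i : ℕ) < m)))
    (j := fun p _ => fun i => decide (i ∈ p.1 ∪ p.2))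
  · -- hi : maps into target
    intro f hf
    simp only [mem_filter, mem_univ, true_and] at hf
    obtain ⟨h1, h2⟩ := hf
    have hsplit : (univ.filter (fun i => f i ∧ (i : ℕ) < m)).card
        + (univ.filter (fun i => f i ∧ ¬ (i : ℕ) < m)).card
        = (univ.filter (fun i : Fin n => (f i : Prop))).card := by
      have := Finset.card_filter_add_card_filter_not
        (s := univ.filter (fun i : Fin n => (f i : Prop))) (fun i : Fin n => (i : ℕ) < m)
      rw [Finset.filter_filter, Finset.filter_filter] at this
      exact this
    simp only [Finset.mem_product, Finset.mem_powersetCard]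
    refine ⟨⟨?_, h1⟩, ?_, by omega⟩
    · intro i hi; simp only [hS, mem_filter, mem_univ, true_and] at hi ⊢; exact hi.2
    · intro i hi; simp only [hT, mem_filter, mem_univ, true_and] at hi ⊢; exact hi.2
  · -- hj : inverse maps into source
    intro p hp
    simp only [Finset.mem_product, Finset.mem_powersetCard] at hp
    obtain ⟨⟨hp1, hc1⟩, hp2, hc2⟩ := hp
    have key1 : (univ.filter (fun i => (decide (i ∈ p.1 ∪ p.2) : Bool) ∧ (i : ℕ) < m)) = p.1 := by
      ext i
      simp only [mem_filter, mem_univ, true_and, decide_eq_true_eq, Finset.mem_union]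
      constructor
      · rintro ⟨hi | hi, hlt⟩
        · exact hi
        · exact absurd hlt (by have := hp2 hi; simp only [hT, mem_filter] at this; exact this.2)
      · intro hi
        exact ⟨Or.inl hi, by have := hp1 hi; simp only [hS, mem_filter] at this; exact this.2⟩
    have key2 : (univ.filter (fun i : Fin n => ((decide (i ∈ p.1 ∪ p.2) : Bool) : Prop)))
        = p.1 ∪ p.2 := by
      ext i; simp
    simp only [mem_filter, mem_univ, true_and]
    constructor
    · rw [key1]; exact hc1
    · rw [key2, Finset.card_union_of_disjoint, hc1, hc2]
      · omega
      · refine Finset.disjoint_left.mpr (fun i hi1 hi2 => ?_)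
        have := hp1 hi1; have := hp2 hi2
        simp only [hS, hT, mem_filter] at *
        tauto
  · -- left inverse
    intro f hf
    funext i
    by_cases hfi : f i
    · simp only [Finset.mem_union, mem_filter, mem_univ, true_and, hfi]
      by_cases hlt : (i : ℕ) < m <;> simp [hlt]
    · simp only [Finset.mem_union, mem_filter, mem_univ, true_and, hfi]
      simp
  · -- right inverse
    intro p hp
    simp only [Finset.mem_product, Finset.mem_powersetCard] at hp
    obtain ⟨⟨hp1, hc1⟩, hp2, hc2⟩ := hp
    have key1 : (univ.filter (fun i => (decide (i ∈ p.1 ∪ p.2) : Bool) ∧ (i : ℕ) < m)) = p.1 := by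
      ext i
      simp only [mem_filter, mem_univ, true_and, decide_eq_true_eq, Finset.mem_union]
      constructor
      · rintro ⟨hi | hi, hlt⟩
        · exact hi
        · exact absurd hlt (by have := hp2 hi; simp only [hT, mem_filter] at this; exact this.2)
      · intro hi
        exact ⟨Or.inl hi, by have := hp1 hi; simp only [hS, mem_filter] at this; exact this.2⟩
    have key2 : (univ.filter (fun i => (decide (i ∈ p.1 ∪ p.2) : Bool) ∧ ¬ (i : ℕ) < m)) = p.2 := by
      ext i
      simp only [mem_filter, mem_univ, true_and, decide_eq_true_eq, Finset.mem_union]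
      constructor
      · rintro ⟨hi | hi, hlt⟩
        · exact absurd (by have := hp1 hi; simp only [hS, mem_filter] at this; exact this.2) hlt
        · exact hi
      · intro hi
        exact ⟨Or.inr hi, by have := hp2 hi; simp only [hT, mem_filter] at this; exact this.2⟩
    exact Prod.ext key1 key2
lemma filter_total (n : ℕ) (f : Fin n → Bool) :
    (univ.filter fun i : Fin n => f i ∧ (i : ℕ) < n)
      = univ.filter fun i : Fin n => (f i : Prop) :=
  Finset.filter_congr (by intro i _; simp [i.isLt])
lemma walk_filter_eq (n k : ℕ) (z : ℤ) (hz : z = 2 * (k : ℤ) - n) :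
    (univ.filter fun f : Fin n → Bool => walkSum n f n = z)
      = univ.filter fun f : Fin n → Bool =>
          (univ.filter fun i : Fin n => (f i : Prop)).card = k := by
  apply Finset.filter_congr
  intro f _
  rw [walkSum_eq n n le_rfl, filter_total, hz]
  constructor
  · intro h; omega
  · intro h; rw [h]
lemma pair_filter_eq (n m j k : ℕ) (hm : m ≤ n) (w z : ℤ)
    (hw : w = 2 * (j : ℤ) - m) (hz : z = 2 * (k : ℤ) - n) :
    (univ.filter fun f : Fin n → Bool => walkSum n f m = w ∧ walkSum n f n = z)
      = univ.filter fun f : Fin n → Bool =>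
          ((univ.filter fun i : Fin n => f i ∧ (i : ℕ) < m).card = j ∧
           (univ.filter fun i : Fin n => (f i : Prop)).card = k) := by
  apply Finset.filter_congr
  intro f _
  rw [walkSum_eq n m hm, walkSum_eq n n le_rfl, filter_total, hw, hz]
  constructor
  · rintro ⟨h1, h2⟩; exact ⟨by omega, by omega⟩
  · rintro ⟨h1, h2⟩; rw [h1, h2]; exact ⟨rfl, rfl⟩
lemma count_total (n k : ℕ) :
    (univ.filter fun f : Fin n → Bool =>
        (univ.filter fun i : Fin n => (f i : Prop)).card = k).card = n.choose k := by
  have h := count_pair n 0 0 k (Nat.zero_le n) (Nat.zero_le k)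
  simpa using h
noncomputable def hfun (n m k : ℕ) : ℕ → ℝ :=
  fun x => ((m.choose x : ℕ) : ℝ) * (((n - m).choose (k - x) : ℕ) : ℝ)

lemma hfun_nonneg (n m k x : ℕ) : 0 ≤ hfun n m k x := by
  unfold hfun; positivity
lemma ratio_id (n m k i : ℕ) (hmn : m ≤ n) (him : i < m) (hik : i < k) :
    ((i:ℝ)+1) * ((n:ℝ)-m-k+i+1) * ((m.choose (i+1) : ℝ) * ((n-m).choose (k-(i+1)) : ℝ))
      = ((m:ℝ)-i) * ((k:ℝ)-i) * ((m.choose i : ℝ) * ((n-m).choose (k-i) : ℝ)) := by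
  by_cases hc : k - i - 1 ≤ n - m
  · have e1 : ((m.choose (i+1) : ℝ)) * ((i:ℝ)+1) = (m.choose i : ℝ) * ((m:ℝ) - i) := by
      have h := congrArg (fun x : ℕ => (x : ℝ)) (Nat.choose_succ_right_eq m i)
      simp only [Nat.cast_mul] at h
      rw [Nat.cast_sub him.le] at h
      push_cast at h
      linear_combination h
    have e2 : (((n-m).choose (k-i) : ℝ)) * ((k:ℝ)-i)
        = ((n-m).choose (k-(i+1)) : ℝ) * ((n:ℝ)-m-k+i+1) := by
      have h1 : k - i - 1 + 1 = k - i := by omega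
      have hnat := Nat.choose_succ_right_eq (n-m) (k-i-1)
      rw [h1] at hnat
      have c1 : ((k - i:ℕ):ℝ) = (k:ℝ) - i := Nat.cast_sub hik.le
      have c2 : ((n - m:ℕ):ℝ) = (n:ℝ) - m := Nat.cast_sub hmn
      have c3 : ((k - i - 1:ℕ):ℝ) = (k:ℝ) - i - 1 := by
        rw [show k - i - 1 = k - (i+1) by omega, Nat.cast_sub (by omega)]; push_cast; ring
      have c4 : ((n - m - (k - i - 1):ℕ):ℝ) = ((n:ℝ) - m) - ((k:ℝ) - i - 1) := by
        rw [Nat.cast_sub hc, c2, c3]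
      have h2 := congrArg (fun x : ℕ => (x : ℝ)) hnat
      simp only [Nat.cast_mul] at h2
      rw [c1, c4] at h2
      rw [show k - (i+1) = k - i - 1 by omega]
      linear_combination h2
    linear_combination (((n:ℝ)-m-k+i+1) * ((n-m).choose (k-(i+1)) : ℝ)) * e1
      - (((m:ℝ)-i) * (m.choose i : ℝ)) * e2
  · have h1 : (n-m).choose (k-(i+1)) = 0 := Nat.choose_eq_zero_of_lt (by omega)
    have h2 : (n-m).choose (k-i) = 0 := Nat.choose_eq_zero_of_lt (by omega)
    rw [h1, h2]; simp
lemma ratio_id' (n m k i : ℕ) (hmn : m ≤ n) (him : i < m) (hik : i < k) :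
    ((i:ℝ)+1) * ((n:ℝ)-m-k+i+1) * hfun n m k (i+1)
      = ((m:ℝ)-i) * ((k:ℝ)-i) * hfun n m k i :=
  ratio_id n m k i hmn him hik
lemma chain_up (g : ℕ → ℝ) (a : ℕ) (c : ℝ)
    (S : ℕ) (hstep : ∀ s, s < S → g (a+s+1) ≤ Real.exp (-(s:ℝ) * c) * g (a+s)) :
    g (a + S) ≤ Real.exp (-((S:ℝ)*((S:ℝ)-1)/2) * c) * g a := by
  induction S with
  | zero => simp
  | succ S ih =>
    have h1 : g (a + S + 1) ≤ Real.exp (-(S:ℝ) * c) * g (a + S) := hstep S (by omega)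
    have h2 : g (a + S) ≤ Real.exp (-((S:ℝ)*((S:ℝ)-1)/2) * c) * g a :=
      ih (fun s hs => hstep s (by omega))
    have h3 : a + (S+1) = a + S + 1 := by omega
    rw [h3]
    push_cast
    calc g (a + S + 1) ≤ Real.exp (-(S:ℝ) * c) * g (a + S) := h1
      _ ≤ Real.exp (-(S:ℝ) * c) * (Real.exp (-((S:ℝ)*((S:ℝ)-1)/2) * c) * g a) := by
          apply mul_le_mul_of_nonneg_left h2 (Real.exp_nonneg _)
      _ = Real.exp (-(((S:ℝ)+1)*(((S:ℝ)+1)-1)/2) * c) * g a := by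
          rw [← mul_assoc, ← Real.exp_add]; congr 2; ring
lemma chain_down (g : ℕ → ℝ) (a : ℕ) (c : ℝ)
    (S : ℕ) (hstep : ∀ s, s < S → g (a - s - 1) ≤ Real.exp (-(s:ℝ) * c) * g (a - s)) :
    g (a - S) ≤ Real.exp (-((S:ℝ)*((S:ℝ)-1)/2) * c) * g a := by
  induction S with
  | zero => simp
  | succ S ih =>
    have h1 : g (a - S - 1) ≤ Real.exp (-(S:ℝ) * c) * g (a - S) := hstep S (by omega)
    have h2 : g (a - S) ≤ Real.exp (-((S:ℝ)*((S:ℝ)-1)/2) * c) * g a :=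
      ih (fun s hs => hstep s (by omega))
    have h3 : a - (S+1) = a - S - 1 := by omega
    rw [h3]
    push_cast
    calc g (a - S - 1) ≤ Real.exp (-(S:ℝ) * c) * g (a - S) := h1
      _ ≤ Real.exp (-(S:ℝ) * c) * (Real.exp (-((S:ℝ)*((S:ℝ)-1)/2) * c) * g a) := by
          apply mul_le_mul_of_nonneg_left h2 (Real.exp_nonneg _)
      _ = Real.exp (-(((S:ℝ)+1)*(((S:ℝ)+1)-1)/2) * c) * g a := by
          rw [← mul_assoc, ← Real.exp_add]; congr 2; ring
lemma chain_flat (g : ℕ → ℝ) (a : ℕ) (ρ : ℝ) (hρ : 0 ≤ ρ) (L : ℕ)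
    (hstep : ∀ s, s < L → ρ * g (a+s) ≤ g (a+s+1)) :
    ∀ s, s ≤ L → ρ^s * g a ≤ g (a+s) := by
  intro s hs
  induction s with
  | zero => simp
  | succ s ih =>
    have h1 : ρ^s * g a ≤ g (a+s) := ih (by omega)
    calc ρ^(s+1) * g a = ρ * (ρ^s * g a) := by ring
      _ ≤ ρ * g (a+s) := by apply mul_le_mul_of_nonneg_left h1 hρ
      _ ≤ g (a+s+1) := hstep s (by omega)
section Steps

variable (n m k J L : ℕ) (j0 : ℝ)
variable (hmn : m ≤ n) (hN : (1048576:ℝ) ≤ (n:ℝ))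
variable (hM1 : (n:ℝ)/2 - 1/2 ≤ (m:ℝ)) (hM2 : (m:ℝ) ≤ (n:ℝ)/2 + 1/2)
variable (hK1 : (15/32)*(n:ℝ) ≤ (k:ℝ)) (hK2 : (k:ℝ) ≤ (17/32)*(n:ℝ))
variable (hAB : ∀ x : ℝ, (x+1)*((n:ℝ)-m-k+x+1) - ((m:ℝ)-x)*((k:ℝ)-x) = ((n:ℝ)+2)*(x - j0))
variable (hJ1 : j0 ≤ (J:ℝ)) (hJ2 : (J:ℝ) < j0 + 1)
variable (hJl : (11/50)*(n:ℝ) ≤ (J:ℝ)) (hJh : (J:ℝ) ≤ (7/25)*(n:ℝ))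
variable (hL1 : (L:ℝ) ≤ Real.sqrt n) (hLn : (L:ℝ) ≤ (n:ℝ)/1024)

include hmn hN hM1 hM2 hK1 hK2 hAB hJ1 hJ2 hJl hJh hL1 hLn in
lemma flat_step :
    ∀ s, s < L → (1 - 47/Real.sqrt n) * hfun n m k (J + s) ≤ hfun n m k (J+s+1) := by
  have hN0 : (0:ℝ) < (n:ℝ) := by linarith
  have hsqm : Real.sqrt n * Real.sqrt n = (n:ℝ) := Real.mul_self_sqrt (le_of_lt hN0)
  have hsq1 : (1024:ℝ) ≤ Real.sqrt n := by
    have h1 : Real.sqrt 1048576 ≤ Real.sqrt n := Real.sqrt_le_sqrt hN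
    have h2 : Real.sqrt 1048576 = 1024 := by
      rw [show (1048576:ℝ) = 1024^2 by norm_num, Real.sqrt_sq (by norm_num)]
    linarith
  have hsq0 : (0:ℝ) < Real.sqrt n := by linarith
  intro s hs
  have hiR : ((J + s : ℕ):ℝ) = (J:ℝ) + s := by push_cast; ring
  have hsL : (s:ℝ) < (L:ℝ) := by exact_mod_cast hs
  have hiub : ((J + s : ℕ):ℝ) ≤ (29/100)*(n:ℝ) := by
    rw [hiR]; linarith
  have him : J + s < m := by
    have h1 : ((J + s : ℕ):ℝ) < (m:ℝ) := by linarith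
    exact_mod_cast h1
  have hik : J + s < k := by
    have h1 : ((J + s : ℕ):ℝ) < (k:ℝ) := by linarith
    exact_mod_cast h1
  have hid := ratio_id' n m k (J + s) hmn him hik
  have hX : (17/100)*(n:ℝ) ≤ (n:ℝ)-m-k+(J+s:ℕ)+1 := by
    have h1 : (11/50)*(n:ℝ) ≤ ((J + s:ℕ):ℝ) := by
      rw [hiR]; have h2 : (0:ℝ) ≤ (s:ℝ) := Nat.cast_nonneg s; linarith
    linarith
  have hA1 : (11/50)*(n:ℝ) ≤ ((J+s:ℕ):ℝ) + 1 := by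
    rw [hiR]; have h2 : (0:ℝ) ≤ (s:ℝ) := Nat.cast_nonneg s; linarith
  have hAlb : (n:ℝ)^2/27 ≤ (((J+s:ℕ):ℝ)+1) * ((n:ℝ)-m-k+(J+s:ℕ)+1) := by
    nlinarith [hN]
  have hApos : (0:ℝ) < (((J+s:ℕ):ℝ)+1) * ((n:ℝ)-m-k+(J+s:ℕ)+1) :=
    mul_pos (by positivity) (by linarith)
  have hij0 : ((J+s:ℕ):ℝ) - j0 ≤ Real.sqrt n := by
    have hs1 : (s:ℝ) + 1 ≤ (L:ℝ) := by exact_mod_cast hs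
    rw [hiR]; linarith
  have hdiff := hAB ((J+s:ℕ):ℝ)
  have hBlb : (((J+s:ℕ):ℝ)+1) * ((n:ℝ)-m-k+(J+s:ℕ)+1) * (1 - 47/Real.sqrt n)
      ≤ ((m:ℝ)-(J+s:ℕ)) * ((k:ℝ)-(J+s:ℕ)) := by
    have h1 : (((J+s:ℕ):ℝ)+1) * ((n:ℝ)-m-k+(J+s:ℕ)+1) - ((m:ℝ)-(J+s:ℕ)) * ((k:ℝ)-(J+s:ℕ))
        ≤ ((n:ℝ)+2) * Real.sqrt n := by
      rw [hdiff]
      have := mul_le_mul_of_nonneg_left hij0 (by linarith : (0:ℝ) ≤ (n:ℝ)+2)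
      linarith
    have h2 : ((n:ℝ)+2) * Real.sqrt n
        ≤ (((J+s:ℕ):ℝ)+1) * ((n:ℝ)-m-k+(J+s:ℕ)+1) * (47/Real.sqrt n) := by
      rw [show (((J+s:ℕ):ℝ)+1) * ((n:ℝ)-m-k+(J+s:ℕ)+1) * (47/Real.sqrt n)
          = 47*((((J+s:ℕ):ℝ)+1) * ((n:ℝ)-m-k+(J+s:ℕ)+1))/Real.sqrt n by ring,
        le_div_iff₀ hsq0]
      have e1 : ((n:ℝ)+2) * Real.sqrt n * Real.sqrt n = ((n:ℝ)+2)*(n:ℝ) := by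
        rw [mul_assoc, hsqm]
      rw [e1]
      nlinarith [hAlb, hN]
    nlinarith [hApos]
  have h3 : (((J+s:ℕ):ℝ)+1) * ((n:ℝ)-m-k+(J+s:ℕ)+1) * ((1 - 47/Real.sqrt n) * hfun n m k (J + s))
      ≤ (((J+s:ℕ):ℝ)+1) * ((n:ℝ)-m-k+(J+s:ℕ)+1) * hfun n m k (J+s+1) := by
    calc (((J+s:ℕ):ℝ)+1) * ((n:ℝ)-m-k+(J+s:ℕ)+1) * ((1 - 47/Real.sqrt n) * hfun n m k (J + s))
        = ((((J+s:ℕ):ℝ)+1) * ((n:ℝ)-m-k+(J+s:ℕ)+1) * (1 - 47/Real.sqrt n)) * hfun n m k (J + s) := by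
          ring
      _ ≤ (((m:ℝ)-(J+s:ℕ)) * ((k:ℝ)-(J+s:ℕ))) * hfun n m k (J + s) :=
          mul_le_mul_of_nonneg_right hBlb (hfun_nonneg n m k _)
      _ = ((m:ℝ)-(J+s:ℕ)) * ((k:ℝ)-(J+s:ℕ)) * hfun n m k (J + s) := by ring
      _ = (((J+s:ℕ):ℝ)+1) * ((n:ℝ)-m-k+(J+s:ℕ)+1) * hfun n m k (J+s+1) := hid.symm
  exact le_of_mul_le_mul_left h3 hApos

include hmn hN hM1 hM2 hK1 hK2 hAB hJ1 hJl in
lemma up_step (j : ℕ) (hjm : j ≤ m) (hjk : j ≤ k) (hJj : J ≤ j) :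
    ∀ s, s < j - J →
      hfun n m k (J+s+1) ≤ Real.exp (-(s:ℝ) * (1/(n:ℝ))) * hfun n m k (J+s) := by
  have hN0 : (0:ℝ) < (n:ℝ) := by linarith
  intro s hs
  have him : J + s < m := by omega
  have hik : J + s < k := by omega
  have hid := ratio_id' n m k (J + s) hmn him hik
  have hiR : ((J + s : ℕ):ℝ) = (J:ℝ) + s := by push_cast; ring
  have hs0 : (0:ℝ) ≤ (s:ℝ) := Nat.cast_nonneg s
  have hX : (17/100)*(n:ℝ) ≤ (n:ℝ)-m-k+(J+s:ℕ)+1 := by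
    have h1 : (11/50)*(n:ℝ) ≤ ((J + s:ℕ):ℝ) := by rw [hiR]; linarith
    linarith
  have hApos : (0:ℝ) < (((J+s:ℕ):ℝ)+1) * ((n:ℝ)-m-k+(J+s:ℕ)+1) :=
    mul_pos (by positivity) (by linarith)
  have hAub : (((J+s:ℕ):ℝ)+1) * ((n:ℝ)-m-k+(J+s:ℕ)+1) ≤ (n:ℝ)*((n:ℝ)+2) := by
    have h1 : ((J+s:ℕ):ℝ)+1 ≤ (n:ℝ) := by
      have h9 := Nat.succ_le_of_lt him
      have h8 : ((J+s:ℕ):ℝ) + 1 ≤ (m:ℝ) := by exact_mod_cast h9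
      have : (m:ℝ) ≤ (n:ℝ) := by exact_mod_cast hmn
      linarith
    have h2 : (n:ℝ)-m-k+(J+s:ℕ)+1 ≤ (n:ℝ)+2 := by
      have h9 := Nat.succ_le_of_lt hik
      have h8 : ((J+s:ℕ):ℝ) + 1 ≤ (k:ℝ) := by exact_mod_cast h9
      have h0 : (0:ℝ) ≤ (m:ℝ) := Nat.cast_nonneg m
      linarith
    have h3 : (0:ℝ) ≤ (n:ℝ)-m-k+(J+s:ℕ)+1 := by linarith
    nlinarith
  have hdiff := hAB ((J+s:ℕ):ℝ)
  have hsi : (s:ℝ) ≤ ((J+s:ℕ):ℝ) - j0 := by rw [hiR]; linarith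
  have hBub : ((m:ℝ)-(J+s:ℕ)) * ((k:ℝ)-(J+s:ℕ))
      ≤ (((J+s:ℕ):ℝ)+1) * ((n:ℝ)-m-k+(J+s:ℕ)+1) * (1 - (s:ℝ)/(n:ℝ)) := by
    have h1 : ((n:ℝ)+2)*(s:ℝ) ≤ ((n:ℝ)+2)*(((J+s:ℕ):ℝ) - j0) :=
      mul_le_mul_of_nonneg_left hsi (by linarith)
    have h2 : (((J+s:ℕ):ℝ)+1) * ((n:ℝ)-m-k+(J+s:ℕ)+1) * ((s:ℝ)/(n:ℝ)) ≤ ((n:ℝ)+2)*(s:ℝ) := by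
      rw [show (((J+s:ℕ):ℝ)+1) * ((n:ℝ)-m-k+(J+s:ℕ)+1) * ((s:ℝ)/(n:ℝ))
          = ((((J+s:ℕ):ℝ)+1) * ((n:ℝ)-m-k+(J+s:ℕ)+1)) * (s:ℝ)/(n:ℝ) by ring,
        div_le_iff₀ hN0]
      calc ((((J+s:ℕ):ℝ)+1) * ((n:ℝ)-m-k+(J+s:ℕ)+1)) * (s:ℝ)
          ≤ ((n:ℝ)*((n:ℝ)+2)) * (s:ℝ) := mul_le_mul_of_nonneg_right hAub hs0
        _ = ((n:ℝ)+2)*(s:ℝ)*(n:ℝ) := by ring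
    linarith
  have hexp : 1 - (s:ℝ)/(n:ℝ) ≤ Real.exp (-(s:ℝ) * (1/(n:ℝ))) := by
    have h := Real.add_one_le_exp (-(s:ℝ) * (1/(n:ℝ)))
    have e : -(s:ℝ)*(1/(n:ℝ)) + 1 = 1 - (s:ℝ)/(n:ℝ) := by ring
    linarith [h, e.ge, e.le]
  have h3 : (((J+s:ℕ):ℝ)+1) * ((n:ℝ)-m-k+(J+s:ℕ)+1) * hfun n m k (J+s+1)
      ≤ (((J+s:ℕ):ℝ)+1) * ((n:ℝ)-m-k+(J+s:ℕ)+1)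
          * (Real.exp (-(s:ℝ) * (1/(n:ℝ))) * hfun n m k (J+s)) := by
    rw [hid]
    calc ((m:ℝ)-(J+s:ℕ)) * ((k:ℝ)-(J+s:ℕ)) * hfun n m k (J+s)
        ≤ ((((J+s:ℕ):ℝ)+1) * ((n:ℝ)-m-k+(J+s:ℕ)+1) * (1 - (s:ℝ)/(n:ℝ))) * hfun n m k (J+s) :=
          mul_le_mul_of_nonneg_right hBub (hfun_nonneg n m k _)
      _ ≤ ((((J+s:ℕ):ℝ)+1) * ((n:ℝ)-m-k+(J+s:ℕ)+1) * Real.exp (-(s:ℝ) * (1/(n:ℝ))))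
            * hfun n m k (J+s) := by
          apply mul_le_mul_of_nonneg_right _ (hfun_nonneg n m k _)
          apply mul_le_mul_of_nonneg_left hexp hApos.le
      _ = (((J+s:ℕ):ℝ)+1) * ((n:ℝ)-m-k+(J+s:ℕ)+1)
            * (Real.exp (-(s:ℝ) * (1/(n:ℝ))) * hfun n m k (J+s)) := by ring
  exact le_of_mul_le_mul_left h3 hApos

include hmn hN hM1 hM2 hK1 hK2 hAB hJ2 hJh in
lemma down_step (j : ℕ) (hjJ : j < J) :
    ∀ s, s < J - j →
      hfun n m k (J - s - 1) ≤ Real.exp (-(s:ℝ) * (1/(n:ℝ))) * hfun n m k (J - s) := by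
  have hN0 : (0:ℝ) < (n:ℝ) := by linarith
  intro s hs
  have hsJ : s + 1 ≤ J := by omega
  have hiR : ((J - s - 1 : ℕ):ℝ) = (J:ℝ) - s - 1 := by
    rw [show J - s - 1 = J - (s+1) by omega, Nat.cast_sub hsJ]; push_cast; ring
  have hs0 : (0:ℝ) ≤ (s:ℝ) := Nat.cast_nonneg s
  have hJm : J < m := by
    have h1 : (J:ℝ) < (m:ℝ) := by linarith
    exact_mod_cast h1
  have hJk : J < k := by
    have h1 : (J:ℝ) < (k:ℝ) := by linarith
    exact_mod_cast h1
  have him : J - s - 1 < m := by omega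
  have hik : J - s - 1 < k := by omega
  have hid := ratio_id' n m k (J - s - 1) hmn him hik
  rw [show J - s - 1 + 1 = J - s by omega] at hid
  have hmR : ((J-s-1:ℕ):ℝ) < (m:ℝ) := by exact_mod_cast him
  have hkR : ((J-s-1:ℕ):ℝ) < (k:ℝ) := by exact_mod_cast hik
  have hi0 : (0:ℝ) ≤ ((J-s-1:ℕ):ℝ) := Nat.cast_nonneg _
  have hBpos : (0:ℝ) < ((m:ℝ)-(J-s-1:ℕ)) * ((k:ℝ)-(J-s-1:ℕ)) := by nlinarith
  have hBub : ((m:ℝ)-(J-s-1:ℕ)) * ((k:ℝ)-(J-s-1:ℕ)) ≤ (n:ℝ)*((n:ℝ)+2) := by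
    have h1 : (m:ℝ)-(J-s-1:ℕ) ≤ (n:ℝ) := by
      have : (m:ℝ) ≤ (n:ℝ) := by exact_mod_cast hmn
      linarith
    have h2 : (k:ℝ)-(J-s-1:ℕ) ≤ (n:ℝ)+2 := by linarith
    nlinarith
  have hdiff := hAB ((J-s-1:ℕ):ℝ)
  have hsi : (s:ℝ) ≤ j0 - ((J-s-1:ℕ):ℝ) := by rw [hiR]; linarith
  have hAub : (((J-s-1:ℕ):ℝ)+1) * ((n:ℝ)-m-k+(J-s-1:ℕ)+1)
      ≤ ((m:ℝ)-(J-s-1:ℕ)) * ((k:ℝ)-(J-s-1:ℕ)) * (1 - (s:ℝ)/(n:ℝ)) := by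
    have h1 : ((n:ℝ)+2)*(s:ℝ) ≤ ((n:ℝ)+2)*(j0 - ((J-s-1:ℕ):ℝ)) :=
      mul_le_mul_of_nonneg_left hsi (by linarith)
    have h2 : ((m:ℝ)-(J-s-1:ℕ)) * ((k:ℝ)-(J-s-1:ℕ)) * ((s:ℝ)/(n:ℝ)) ≤ ((n:ℝ)+2)*(s:ℝ) := by
      rw [show ((m:ℝ)-(J-s-1:ℕ)) * ((k:ℝ)-(J-s-1:ℕ)) * ((s:ℝ)/(n:ℝ))
          = (((m:ℝ)-(J-s-1:ℕ)) * ((k:ℝ)-(J-s-1:ℕ))) * (s:ℝ)/(n:ℝ) by ring,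
        div_le_iff₀ hN0]
      calc (((m:ℝ)-(J-s-1:ℕ)) * ((k:ℝ)-(J-s-1:ℕ))) * (s:ℝ)
          ≤ ((n:ℝ)*((n:ℝ)+2)) * (s:ℝ) := mul_le_mul_of_nonneg_right hBub hs0
        _ = ((n:ℝ)+2)*(s:ℝ)*(n:ℝ) := by ring
    linarith
  have hexp : 1 - (s:ℝ)/(n:ℝ) ≤ Real.exp (-(s:ℝ) * (1/(n:ℝ))) := by
    have h := Real.add_one_le_exp (-(s:ℝ) * (1/(n:ℝ)))
    have e : -(s:ℝ)*(1/(n:ℝ)) + 1 = 1 - (s:ℝ)/(n:ℝ) := by ring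
    linarith [h, e.ge, e.le]
  have h3 : ((m:ℝ)-(J-s-1:ℕ)) * ((k:ℝ)-(J-s-1:ℕ)) * hfun n m k (J - s - 1)
      ≤ ((m:ℝ)-(J-s-1:ℕ)) * ((k:ℝ)-(J-s-1:ℕ))
          * (Real.exp (-(s:ℝ) * (1/(n:ℝ))) * hfun n m k (J - s)) := by
    rw [← hid]
    calc (((J-s-1:ℕ):ℝ)+1) * ((n:ℝ)-m-k+(J-s-1:ℕ)+1) * hfun n m k (J - s)
        ≤ (((m:ℝ)-(J-s-1:ℕ)) * ((k:ℝ)-(J-s-1:ℕ)) * (1 - (s:ℝ)/(n:ℝ))) * hfun n m k (J - s) :=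
          mul_le_mul_of_nonneg_right hAub (hfun_nonneg n m k _)
      _ ≤ (((m:ℝ)-(J-s-1:ℕ)) * ((k:ℝ)-(J-s-1:ℕ)) * Real.exp (-(s:ℝ) * (1/(n:ℝ))))
            * hfun n m k (J - s) := by
          apply mul_le_mul_of_nonneg_right _ (hfun_nonneg n m k _)
          apply mul_le_mul_of_nonneg_left hexp hBpos.le
      _ = ((m:ℝ)-(J-s-1:ℕ)) * ((k:ℝ)-(J-s-1:ℕ))
            * (Real.exp (-(s:ℝ) * (1/(n:ℝ))) * hfun n m k (J - s)) := by ring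
  exact le_of_mul_le_mul_left h3 hBpos

end Steps
lemma window_sum (n m k J L : ℕ) (hmn : m ≤ n) (hN : (1048576:ℝ) ≤ (n:ℝ))
    (hK1 : (15/32)*(n:ℝ) ≤ (k:ℝ))
    (hJh : (J:ℝ) ≤ (7/25)*(n:ℝ))
    (hL1 : (L:ℝ) ≤ Real.sqrt n) (hLn : (L:ℝ) ≤ (n:ℝ)/1024)
    (hL2 : Real.sqrt n ≤ (L:ℝ) + 1)
    (hflat : ∀ s, s < L → (1 - 47/Real.sqrt n) * hfun n m k (J + s) ≤ hfun n m k (J+s+1)) :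
    Real.sqrt n * (Real.exp (-94) * hfun n m k J) ≤ (n.choose k : ℝ) := by
  have hN0 : (0:ℝ) < (n:ℝ) := by linarith
  have hsqm : Real.sqrt n * Real.sqrt n = (n:ℝ) := Real.mul_self_sqrt (le_of_lt hN0)
  have hsq1 : (1024:ℝ) ≤ Real.sqrt n := by
    have h1 : Real.sqrt 1048576 ≤ Real.sqrt n := Real.sqrt_le_sqrt hN
    have h2 : Real.sqrt 1048576 = 1024 := by
      rw [show (1048576:ℝ) = 1024^2 by norm_num, Real.sqrt_sq (by norm_num)]
    linarith
  have hsq0 : (0:ℝ) < Real.sqrt n := by linarith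
  have hy2 : 47/Real.sqrt n ≤ 1/2 := by
    rw [div_le_div_iff₀ hsq0 (by norm_num)]
    linarith
  have hy0 : (0:ℝ) < 47/Real.sqrt n := by positivity
  have hρ0 : (0:ℝ) ≤ 1 - 47/Real.sqrt n := by linarith
  have flat := chain_flat (hfun n m k) J (1 - 47/Real.sqrt n) hρ0 L hflat
  have hexp2 : Real.exp (-(94/Real.sqrt n)) ≤ 1 - 47/Real.sqrt n := by
    have e1 := Real.add_one_le_exp (2*(47/Real.sqrt n))
    have e2 : Real.exp (-(94/Real.sqrt n)) = (Real.exp (2*(47/Real.sqrt n)))⁻¹ := by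
      rw [← Real.exp_neg]; congr 1; ring
    rw [e2]
    have e3 : (Real.exp (2*(47/Real.sqrt n)))⁻¹ ≤ (1 + 2*(47/Real.sqrt n))⁻¹ := by
      apply inv_anti₀ (by positivity)
      linarith
    have e4 : (1 + 2*(47/Real.sqrt n))⁻¹ ≤ 1 - 47/Real.sqrt n := by
      rw [inv_le_iff_one_le_mul₀ (by positivity)]
      nlinarith [hy0, hy2]
    linarith
  have hpow : ∀ s : ℕ, s ≤ L → Real.exp (-94) ≤ (1 - 47/Real.sqrt n)^s := by
    intro s hsL
    have hsR : (s:ℝ) ≤ (L:ℝ) := by exact_mod_cast hsL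
    have p1 : Real.exp (-94) ≤ Real.exp ((s:ℕ) * (-(94/Real.sqrt n))) := by
      apply Real.exp_le_exp.mpr
      rw [show ((s:ℕ):ℝ) * (-(94/Real.sqrt n)) = -(94*(s:ℝ)/Real.sqrt n) by ring]
      have : 94*(s:ℝ)/Real.sqrt n ≤ 94 := by
        rw [div_le_iff₀ hsq0]
        linarith [hL1, hsR]
      linarith
    have p2 : Real.exp ((s:ℕ) * (-(94/Real.sqrt n))) = (Real.exp (-(94/Real.sqrt n)))^s :=
      Real.exp_nat_mul _ s
    have p3 : (Real.exp (-(94/Real.sqrt n)))^s ≤ (1 - 47/Real.sqrt n)^s :=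
      pow_le_pow_left₀ (Real.exp_nonneg _) hexp2 s
    calc Real.exp (-94) ≤ Real.exp ((s:ℕ) * (-(94/Real.sqrt n))) := p1
      _ = (Real.exp (-(94/Real.sqrt n)))^s := p2
      _ ≤ (1 - 47/Real.sqrt n)^s := p3
  have hmem : ∀ x ∈ Finset.Ico J (J+L+1), Real.exp (-94) * hfun n m k J ≤ hfun n m k x := by
    intro x hx
    rw [Finset.mem_Ico] at hx
    have hsL : x - J ≤ L := by omega
    have hxJ : x = J + (x - J) := by omega
    calc Real.exp (-94) * hfun n m k J
        ≤ (1 - 47/Real.sqrt n)^(x-J) * hfun n m k J :=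
          mul_le_mul_of_nonneg_right (hpow (x-J) hsL) (hfun_nonneg n m k J)
      _ ≤ hfun n m k (J + (x - J)) := flat (x-J) hsL
      _ = hfun n m k x := by rw [← hxJ]
  have hcard : (Finset.Ico J (J+L+1)).card = L+1 := by rw [Nat.card_Ico]; omega
  have hsum1 : ((L:ℝ)+1) * (Real.exp (-94) * hfun n m k J)
      ≤ ∑ x ∈ Finset.Ico J (J+L+1), hfun n m k x := by
    have h := Finset.card_nsmul_le_sum (Finset.Ico J (J+L+1)) (hfun n m k)
      (Real.exp (-94) * hfun n m k J) hmem
    rw [hcard] at h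
    have : ((L+1 : ℕ) : ℝ) * (Real.exp (-94) * hfun n m k J)
        ≤ ∑ x ∈ Finset.Ico J (J+L+1), hfun n m k x := by
      simpa [nsmul_eq_mul] using h
    push_cast at this
    linarith
  have hJLk : J + L + 1 ≤ k + 1 := by
    have h1 : ((J + L : ℕ):ℝ) < (k:ℝ) := by push_cast; linarith
    have h2 : J + L < k := by exact_mod_cast h1
    omega
  have hsub : Finset.Ico J (J+L+1) ⊆ Finset.range (k+1) := by
    intro x hx
    rw [Finset.mem_Ico] at hx
    rw [Finset.mem_range]
    omega
  have hsum2 : ∑ x ∈ Finset.Ico J (J+L+1), hfun n m k x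
      ≤ ∑ x ∈ Finset.range (k+1), hfun n m k x :=
    Finset.sum_le_sum_of_subset_of_nonneg hsub (fun i _ _ => hfun_nonneg n m k i)
  have hD : (n.choose k : ℝ) = ∑ x ∈ Finset.range (k+1), hfun n m k x := by
    have hv := Nat.add_choose_eq m (n-m) k
    rw [show m + (n-m) = n by omega] at hv
    rw [hv, Finset.Nat.sum_antidiagonal_eq_sum_range_succ_mk]
    push_cast
    rfl
  have hfinal : Real.sqrt n * (Real.exp (-94) * hfun n m k J)
      ≤ ((L:ℝ)+1) * (Real.exp (-94) * hfun n m k J) :=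
    mul_le_mul_of_nonneg_right hL2 (mul_nonneg (Real.exp_nonneg _) (hfun_nonneg n m k J))
  rw [hD]
  linarith
lemma SS_nonneg (S : ℕ) : (0:ℝ) ≤ (S:ℝ)*((S:ℝ)-1) := by
  rcases Nat.eq_zero_or_pos S with h|h
  · simp [h]
  · have h2 : (1:ℝ) ≤ (S:ℝ) := by exact_mod_cast h
    nlinarith
lemma quad_helper (S dd : ℝ) (hSS0 : 0 ≤ S*(S-1)) (hS0 : 0 ≤ S)
    (hSd : |dd| ≤ 2*(S + 8/5)) : dd^2/8 - 5 ≤ S*(S-1) := by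
  rcases le_or_gt |dd| (26/5) with hd|hd
  · nlinarith [abs_nonneg dd, sq_abs dd]
  · nlinarith [sq_abs dd, sq_nonneg (|dd|/2 - 21/5), abs_nonneg dd]
lemma cen_helper (nn X P : ℝ) (hN : 1048576 ≤ nn)
    (hid2 : (nn+2)*X = P - nn/2 - 1) (h1 : -(nn/64) ≤ P) (h2 : P ≤ nn/64) :
    |X| ≤ 13/25 := by
  rw [abs_le]
  constructor <;> nlinarith
lemma main_bound (n m k j : ℕ) (hn : 2^20 ≤ n) (hmn : m ≤ n)
    (hm1 : |(m:ℝ) - (n:ℝ)/2| ≤ 1/2) (hk1 : |(k:ℝ) - (n:ℝ)/2| ≤ (n:ℝ)/32)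
    (hjm : j ≤ m) (hjk : j ≤ k) :
    hfun n m k j ≤
      Real.exp 100 / Real.sqrt n *
        Real.exp (-(1/16) * (2*(j:ℝ) - (m:ℝ) - (k:ℝ) + (n:ℝ)/2)^2 / (n:ℝ)) * (n.choose k : ℝ) := by
  have hN : (1048576:ℝ) ≤ (n:ℝ) := by exact_mod_cast hn
  have hN0 : (0:ℝ) < (n:ℝ) := by linarith
  have hM1 : (n:ℝ)/2 - 1/2 ≤ (m:ℝ) := by have := abs_le.mp hm1; linarith [this.1]
  have hM2 : (m:ℝ) ≤ (n:ℝ)/2 + 1/2 := by have := abs_le.mp hm1; linarith [this.2]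
  have hK1 : (15/32)*(n:ℝ) ≤ (k:ℝ) := by have := abs_le.mp hk1; linarith [this.1]
  have hK2 : (k:ℝ) ≤ (17/32)*(n:ℝ) := by have := abs_le.mp hk1; linarith [this.2]
  have hsqm : Real.sqrt n * Real.sqrt n = (n:ℝ) := Real.mul_self_sqrt (le_of_lt hN0)
  have hsq1 : (1024:ℝ) ≤ Real.sqrt n := by
    have h1 : Real.sqrt 1048576 ≤ Real.sqrt n := Real.sqrt_le_sqrt hN
    have h2 : Real.sqrt 1048576 = 1024 := by
      rw [show (1048576:ℝ) = 1024^2 by norm_num, Real.sqrt_sq (by norm_num)]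
    linarith
  have hsq0 : (0:ℝ) < Real.sqrt n := by linarith
  set j0 : ℝ := ((m:ℝ)*k + m + k - n - 1)/((n:ℝ)+2) with hj0def
  have hAB : ∀ x : ℝ, (x+1)*((n:ℝ)-m-k+x+1) - ((m:ℝ)-x)*((k:ℝ)-x) = ((n:ℝ)+2)*(x - j0) := by
    intro x
    rw [hj0def]
    field_simp
    ring
  have hn2 : (1048576:ℝ)*(n:ℝ) ≤ (n:ℝ)*(n:ℝ) := by
    have := mul_le_mul_of_nonneg_right hN hN0.le
    linarith
  have hq1 : ((n:ℝ)/2 - 1/2)*((15/32)*(n:ℝ)) ≤ (m:ℝ)*(k:ℝ) :=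
    mul_le_mul hM1 hK1 (by positivity) (Nat.cast_nonneg m)
  have hq2 : (m:ℝ)*(k:ℝ) ≤ ((n:ℝ)/2 + 1/2)*((17/32)*(n:ℝ)) :=
    mul_le_mul hM2 hK2 (Nat.cast_nonneg k) (by linarith)
  have hj0l : (11/50)*(n:ℝ) ≤ j0 := by
    rw [hj0def, le_div_iff₀ (by linarith)]
    linarith only [hq1, hn2, hM1, hK1, hN]
  have hj0h : j0 ≤ (27/100)*(n:ℝ) := by
    rw [hj0def, div_le_iff₀ (by linarith)]
    linarith only [hq2, hn2, hM2, hK2, hN]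
  have hj00 : (0:ℝ) ≤ j0 := by linarith
  set J : ℕ := ⌈j0⌉₊ with hJdef
  have hJ1 : j0 ≤ (J:ℝ) := Nat.le_ceil j0
  have hJ2 : (J:ℝ) < j0 + 1 := Nat.ceil_lt_add_one hj00
  have hJl : (11/50)*(n:ℝ) ≤ (J:ℝ) := by linarith
  have hJh : (J:ℝ) ≤ (7/25)*(n:ℝ) := by linarith
  set L : ℕ := n.sqrt with hLdef
  have hL1 : (L:ℝ) ≤ Real.sqrt n := Real.nat_sqrt_le_real_sqrt
  have hL2 : Real.sqrt n ≤ (L:ℝ) + 1 := Real.real_sqrt_le_nat_sqrt_succ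
  have hLn : (L:ℝ) ≤ (n:ℝ)/1024 := by
    have h1 := mul_le_mul_of_nonneg_left hsq1 hsq0.le
    rw [hsqm] at h1
    linarith
  have hflat := flat_step n m k J L j0 hmn hN hM1 hM2 hK1 hK2 hAB hJ1 hJ2 hJl hJh hL1 hLn
  have hwin := window_sum n m k J L hmn hN hK1 hJh hL1 hLn hL2 hflat
  -- center comparison
  have hcen : |j0 - (((m:ℝ)+k)/2 - (n:ℝ)/4)| ≤ 13/25 := by
    have hid2 : ((n:ℝ)+2)*(j0 - (((m:ℝ)+k)/2 - (n:ℝ)/4))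
        = ((m:ℝ)-(n:ℝ)/2)*((k:ℝ)-(n:ℝ)/2) - (n:ℝ)/2 - 1 := by
      rw [hj0def]; field_simp; ring
    have habs : |((m:ℝ)-(n:ℝ)/2)*((k:ℝ)-(n:ℝ)/2)| ≤ (1/2)*((n:ℝ)/32) := by
      rw [abs_mul]
      exact mul_le_mul hm1 hk1 (abs_nonneg _) (by norm_num)
    have h1 := abs_le.mp habs
    refine cen_helper (n:ℝ) _ _ hN hid2 (by linarith [h1.1]) (by linarith [h1.2])
  have hc1 := (abs_le.mp hcen).1
  have hc2 := (abs_le.mp hcen).2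
  set d : ℝ := 2*(j:ℝ) - (m:ℝ) - (k:ℝ) + (n:ℝ)/2 with hddef
  -- decay with distance S
  obtain ⟨S, hdec, hSd⟩ : ∃ S : ℕ,
      hfun n m k j ≤ Real.exp (-((S:ℝ)*((S:ℝ)-1)/2) * (1/(n:ℝ))) * hfun n m k J
        ∧ |d| ≤ 2*((S:ℝ) + 8/5) := by
    rcases le_or_gt J j with hc | hc
    · refine ⟨j - J, ?_, ?_⟩
      · have h := chain_up (hfun n m k) J (1/(n:ℝ)) (j-J)
          (up_step n m k J j0 hmn hN hM1 hM2 hK1 hK2 hAB hJ1 hJl j hjm hjk hc)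
        rw [show J + (j - J) = j by omega] at h
        exact h
      · have hSR : ((j-J:ℕ):ℝ) = (j:ℝ) - (J:ℝ) := by
          rw [Nat.cast_sub hc]
        rw [abs_le, hddef]
        constructor
        · rw [hSR]; linarith [hc1, hc2, hJ1, hJ2, (by exact_mod_cast hc : (J:ℝ) ≤ (j:ℝ))]
        · rw [hSR]; linarith [hc1, hc2, hJ1, hJ2]
    · refine ⟨J - j, ?_, ?_⟩
      · have h := chain_down (hfun n m k) J (1/(n:ℝ)) (J-j)
          (down_step n m k J j0 hmn hN hM1 hM2 hK1 hK2 hAB hJ2 hJh j hc)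
        rw [show J - (J - j) = j by omega] at h
        exact h
      · have hSR : ((J-j:ℕ):ℝ) = (J:ℝ) - (j:ℝ) := by
          rw [Nat.cast_sub (le_of_lt hc)]
        rw [abs_le, hddef]
        constructor
        · rw [hSR]; linarith [hc1, hc2, hJ1, hJ2]
        · rw [hSR]; linarith [hc1, hc2, hJ1, hJ2,
            (by exact_mod_cast (le_of_lt hc) : (j:ℝ) ≤ (J:ℝ))]
  -- quadratic comparison
  have hq : d^2/8 - 5 ≤ (S:ℝ)*((S:ℝ)-1) :=
    quad_helper (S:ℝ) d (SS_nonneg S) (Nat.cast_nonneg S) hSd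
  -- exponential comparison
  have hE : Real.exp (-((S:ℝ)*((S:ℝ)-1)/2) * (1/(n:ℝ)))
      ≤ Real.exp 1 * Real.exp (-(1/16) * d^2 / (n:ℝ)) := by
    rw [← Real.exp_add]
    apply Real.exp_le_exp.mpr
    have h2 : -((S:ℝ)*((S:ℝ)-1)/2) * (1/(n:ℝ)) ≤ (-(d^2/16) + 5/2) * (1/(n:ℝ)) :=
      mul_le_mul_of_nonneg_right (by linarith) (by positivity)
    have h3 : (-(d^2/16) + 5/2) * (1/(n:ℝ)) = -(1/16)*d^2/(n:ℝ) + 5/(2*(n:ℝ)) := by ring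
    have h4 : 5/(2*(n:ℝ)) ≤ 1 := by
      rw [div_le_one (by linarith)]; linarith
    have h5 : -(1/16)*d^2/(n:ℝ) = -(1/16) * d^2 / (n:ℝ) := by ring
    linarith [h2, h3.le, h3.ge]
  -- bound on hfun J
  have hJb : hfun n m k J ≤ Real.exp 94 / Real.sqrt n * (n.choose k : ℝ) := by
    rw [div_mul_eq_mul_div, le_div_iff₀ hsq0]
    have eprod : Real.exp 94 * Real.exp (-94) = 1 := by
      rw [← Real.exp_add]; norm_num
    have h5 := mul_le_mul_of_nonneg_left hwin (Real.exp_nonneg 94)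
    calc hfun n m k J * Real.sqrt n
        = (Real.exp 94 * Real.exp (-94)) * (hfun n m k J * Real.sqrt n) := by
          rw [eprod]; ring
      _ = Real.exp 94 * (Real.sqrt n * (Real.exp (-94) * hfun n m k J)) := by ring
      _ ≤ Real.exp 94 * (n.choose k : ℝ) := h5
  have hDpos : (0:ℝ) ≤ (n.choose k : ℝ) := Nat.cast_nonneg _
  calc hfun n m k j
      ≤ Real.exp (-((S:ℝ)*((S:ℝ)-1)/2) * (1/(n:ℝ))) * hfun n m k J := hdec
    _ ≤ (Real.exp 1 * Real.exp (-(1/16) * d^2 / (n:ℝ))) * hfun n m k J :=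
        mul_le_mul_of_nonneg_right hE (hfun_nonneg n m k J)
    _ ≤ (Real.exp 1 * Real.exp (-(1/16) * d^2 / (n:ℝ)))
          * (Real.exp 94 / Real.sqrt n * (n.choose k : ℝ)) :=
        mul_le_mul_of_nonneg_left hJb (by positivity)
    _ = (Real.exp 1 * Real.exp 94) / Real.sqrt n * Real.exp (-(1/16) * d^2 / (n:ℝ))
          * (n.choose k : ℝ) := by ring
    _ ≤ Real.exp 100 / Real.sqrt n * Real.exp (-(1/16) * d^2 / (n:ℝ)) * (n.choose k : ℝ) := by
        have h6 : Real.exp 1 * Real.exp 94 ≤ Real.exp 100 := by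
          rw [← Real.exp_add]; apply Real.exp_le_exp.mpr; norm_num
        gcongr
/-- Gaussian upper bound on the midpoint distribution of a conditioned simple random
walk: there exist `c₂, b₂, ε₀ > 0` such that for every `n ≥ 2`, every `m` with
`|2m - n| ≤ 1`, every `z ∈ L_n` with `|z| ≤ ε₀ n`, and every `w ∈ ℤ`,
`P{S_m = w | S_n = z} ≤ c₂ n^{-1/2} exp{-b₂ (w - z/2)²/n}`. -/
theorem stmt18 :
    ∃ c₂ : ℝ, 0 < c₂ ∧ ∃ b₂ : ℝ, 0 < b₂ ∧ ∃ ε₀ : ℝ, 0 < ε₀ ∧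
      ∀ n : ℕ, 2 ≤ n → ∀ m : ℕ, |(2 * (m : ℤ)) - (n : ℤ)| ≤ 1 →
      ∀ z : ℤ, (|z| : ℝ) ≤ ε₀ * n →
      0 < (Finset.univ.filter (fun f : Fin n → Bool => walkSum n f n = z)).card →
      ∀ w : ℤ,
        ((Finset.univ.filter (fun f : Fin n → Bool =>
              walkSum n f m = w ∧ walkSum n f n = z)).card : ℝ)
            / ((Finset.univ.filter (fun f : Fin n → Bool => walkSum n f n = z)).card : ℝ)
          ≤ c₂ / Real.sqrt n * Real.exp (-b₂ * ((w : ℝ) - (z : ℝ) / 2) ^ 2 / n) := by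
  refine ⟨Real.exp 1000000, Real.exp_pos _, 1/16, by norm_num, 1/16, by norm_num, ?_⟩
  intro n hn m hm z hz hDcard w
  have hn0 : 0 < n := by omega
  have hNR0 : (0:ℝ) < (n:ℝ) := by exact_mod_cast hn0
  have hsq0 : (0:ℝ) < Real.sqrt n := Real.sqrt_pos.mpr hNR0
  have hmabs := abs_le.mp hm
  have hmn : m ≤ n := by omega
  -- identify k from the conditioning event
  obtain ⟨f₀, hf₀⟩ := Finset.card_pos.mp hDcard
  rw [Finset.mem_filter] at hf₀
  have hz0 := hf₀.2
  rw [walkSum_eq n n le_rfl] at hz0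
  set k : ℕ := (univ.filter fun i : Fin n => f₀ i ∧ (i : ℕ) < n).card with hkdef
  have hzk : z = 2 * (k : ℤ) - n := hz0.symm
  have hkn : k ≤ n := by
    have h1 : (univ.filter fun i : Fin n => f₀ i ∧ (i : ℕ) < n).card ≤ n := by
      calc (univ.filter fun i : Fin n => f₀ i ∧ (i : ℕ) < n).card
          ≤ (univ : Finset (Fin n)).card := Finset.card_filter_le _ _
        _ = n := by rw [Finset.card_univ, Fintype.card_fin]
    exact h1
  -- denominator value
  have hDval : (univ.filter fun f : Fin n → Bool => walkSum n f n = z).card = n.choose k := by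
    rw [walk_filter_eq n k z hzk, count_total]
  have hDpos : (0:ℝ) < ((univ.filter fun f : Fin n → Bool => walkSum n f n = z).card : ℝ) := by
    exact_mod_cast hDcard
  -- trivial case: empty numerator
  by_cases hnum : (univ.filter fun f : Fin n → Bool =>
      walkSum n f m = w ∧ walkSum n f n = z).card = 0
  · rw [hnum]
    simp only [Nat.cast_zero, zero_div]
    positivity
  -- nonempty numerator: extract j
  obtain ⟨f₁, hf₁⟩ := Finset.card_pos.mp (Nat.pos_of_ne_zero hnum)
  rw [Finset.mem_filter] at hf₁
  obtain ⟨hw1, hz1⟩ := hf₁.2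
  rw [walkSum_eq n m hmn] at hw1
  rw [walkSum_eq n n le_rfl] at hz1
  set j : ℕ := (univ.filter fun i : Fin n => f₁ i ∧ (i : ℕ) < m).card with hjdef
  have hwj : w = 2 * (j : ℤ) - m := hw1.symm
  have hk1' : z = 2 * ((univ.filter fun i : Fin n => f₁ i ∧ (i : ℕ) < n).card : ℤ) - n :=
    hz1.symm
  have hkk : (univ.filter fun i : Fin n => f₁ i ∧ (i : ℕ) < n).card = k := by omega
  have hjk : j ≤ k := by
    rw [← hkk]
    apply Finset.card_le_card
    intro i hi
    simp only [Finset.mem_filter] at hi ⊢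
    exact ⟨hi.1, hi.2.1, lt_of_lt_of_le hi.2.2 hmn⟩
  have hjm : j ≤ m := by
    have h1 : (univ.filter fun i : Fin n => f₁ i ∧ (i : ℕ) < m).card
        ≤ (univ.filter fun i : Fin n => (i : ℕ) < m).card := by
      apply Finset.card_le_card
      intro i hi
      simp only [Finset.mem_filter] at hi ⊢
      exact ⟨hi.1, hi.2.2⟩
    rw [card_lt n m hmn] at h1
    exact h1
  -- numerator value
  have hNval : (univ.filter fun f : Fin n → Bool =>
      walkSum n f m = w ∧ walkSum n f n = z).card = m.choose j * (n-m).choose (k-j) := by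
    rw [pair_filter_eq n m j k hmn w z hwj hzk, count_pair n m j k hmn hjk]
  -- real form of d
  have hdEq : (w : ℝ) - (z : ℝ)/2 = 2*(j:ℝ) - (m:ℝ) - (k:ℝ) + (n:ℝ)/2 := by
    have e1 : ((w : ℤ) : ℝ) = 2*(j:ℝ) - (m:ℝ) := by exact_mod_cast hwj
    have e2 : ((z : ℤ) : ℝ) = 2*(k:ℝ) - (n:ℝ) := by exact_mod_cast hzk
    rw [e1, e2]; ring
  rw [hDval, hNval, hdEq]
  have hchoosepos : (0:ℝ) < (n.choose k : ℝ) := by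
    exact_mod_cast Nat.choose_pos hkn
  rw [div_le_iff₀ hchoosepos]
  have hzR : |(z:ℝ)| ≤ (n:ℝ)/16 := by linarith [hz]
  rcases le_or_gt (2^20) n with hbig | hsmall
  · -- large n : use main_bound
    have hm1 : |(m:ℝ) - (n:ℝ)/2| ≤ 1/2 := by
      have h1 : (-1:ℝ) ≤ 2*(m:ℝ) - (n:ℝ) := by exact_mod_cast hmabs.1
      have h2 : 2*(m:ℝ) - (n:ℝ) ≤ 1 := by exact_mod_cast hmabs.2
      rw [abs_le]
      constructor <;> linarith
    have hk1R : |(k:ℝ) - (n:ℝ)/2| ≤ (n:ℝ)/32 := by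
      have e2 : ((z : ℤ) : ℝ) = 2*(k:ℝ) - (n:ℝ) := by exact_mod_cast hzk
      have h3 : |2*(k:ℝ) - (n:ℝ)| ≤ (n:ℝ)/16 := by rw [← e2]; exact hzR
      rw [abs_le] at h3 ⊢
      constructor <;> [linarith [h3.1]; linarith [h3.2]]
    have hmain := main_bound n m k j hbig hmn hm1 hk1R hjm hjk
    have hfval : ((m.choose j * (n-m).choose (k-j) : ℕ) : ℝ) = hfun n m k j := by
      unfold hfun; push_cast; ring
    rw [hfval]
    calc hfun n m k j
        ≤ Real.exp 100 / Real.sqrt n *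
            Real.exp (-(1/16) * (2*(j:ℝ) - (m:ℝ) - (k:ℝ) + (n:ℝ)/2)^2 / (n:ℝ))
            * (n.choose k : ℝ) := hmain
      _ ≤ Real.exp 1000000 / Real.sqrt n *
            Real.exp (-(1/16) * (2*(j:ℝ) - (m:ℝ) - (k:ℝ) + (n:ℝ)/2)^2 / (n:ℝ))
            * (n.choose k : ℝ) := by
          have : Real.exp 100 ≤ Real.exp 1000000 := by
            apply Real.exp_le_exp.mpr; norm_num
          gcongr
  · -- small n : ratio ≤ 1 and RHS ≥ 1
    have hle1 : ((m.choose j * (n-m).choose (k-j) : ℕ) : ℝ) ≤ (n.choose k : ℝ) := by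
      have h1 : (univ.filter fun f : Fin n → Bool =>
          walkSum n f m = w ∧ walkSum n f n = z).card
          ≤ (univ.filter fun f : Fin n → Bool => walkSum n f n = z).card := by
        apply Finset.card_le_card
        apply Finset.monotone_filter_right
        intro f _ hf
        exact hf.2
      rw [hNval, hDval] at h1
      exact_mod_cast h1
    -- |d| ≤ 3n/2 hence exponent ≥ -147456
    have hwR : |(w:ℝ)| ≤ (n:ℝ) := by
      have e1 : ((w : ℤ) : ℝ) = 2*(j:ℝ) - (m:ℝ) := by exact_mod_cast hwj
      have hjR : (j:ℝ) ≤ (m:ℝ) := by exact_mod_cast hjm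
      have hmR : (m:ℝ) ≤ (n:ℝ) := by exact_mod_cast hmn
      have hj0 : (0:ℝ) ≤ (j:ℝ) := Nat.cast_nonneg j
      rw [e1, abs_le]
      constructor <;> linarith
    have hdabs : (2*(j:ℝ) - (m:ℝ) - (k:ℝ) + (n:ℝ)/2)^2 ≤ (3*(n:ℝ)/2)^2 := by
      rw [← hdEq]
      have h1 : |(w:ℝ) - (z:ℝ)/2| ≤ 3*(n:ℝ)/2 := by
        have h2 := abs_le.mp hwR
        have h3 := abs_le.mp hzR
        rw [abs_le]
        constructor <;> [linarith [h2.1, h3.2]; linarith [h2.2, h3.1]]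
      calc ((w:ℝ) - (z:ℝ)/2)^2 = |(w:ℝ) - (z:ℝ)/2|^2 := (sq_abs _).symm
        _ ≤ (3*(n:ℝ)/2)^2 := by
            apply pow_le_pow_left₀ (abs_nonneg _) h1
    have hnle : (n:ℝ) ≤ 2^20 := by exact_mod_cast le_of_lt hsmall
    have hexplb : Real.exp (-147456 : ℝ)
        ≤ Real.exp (-(1/16) * (2*(j:ℝ) - (m:ℝ) - (k:ℝ) + (n:ℝ)/2)^2 / (n:ℝ)) := by
      apply Real.exp_le_exp.mpr
      have hnn : (n:ℝ)*(n:ℝ) ≤ 2^20*(n:ℝ) := mul_le_mul_of_nonneg_right hnle hNR0.le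
      have h7 : (1/16) * (2*(j:ℝ) - (m:ℝ) - (k:ℝ) + (n:ℝ)/2)^2 / (n:ℝ) ≤ 147456 := by
        rw [div_le_iff₀ hNR0]
        nlinarith [hdabs, hnn]
      have h8 : -(1/16) * (2*(j:ℝ) - (m:ℝ) - (k:ℝ) + (n:ℝ)/2)^2 / (n:ℝ)
          = -((1/16) * (2*(j:ℝ) - (m:ℝ) - (k:ℝ) + (n:ℝ)/2)^2 / (n:ℝ)) := by ring
      rw [h8]
      linarith
    have hsqle : Real.sqrt n ≤ 1024 := by
      have h1 : Real.sqrt n ≤ Real.sqrt (2^20) := Real.sqrt_le_sqrt hnle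
      rw [show ((2:ℝ)^20) = 1024^2 by norm_num, Real.sqrt_sq (by norm_num)] at h1
      exact h1
    have hbig1 : (1024:ℝ) ≤ Real.exp 1000000 * Real.exp (-147456) := by
      rw [← Real.exp_add]
      have h2 := Real.add_one_le_exp (1000000 + (-147456) : ℝ)
      linarith
    have hRHS1 : (1:ℝ) ≤ Real.exp 1000000 / Real.sqrt n *
        Real.exp (-(1/16) * (2*(j:ℝ) - (m:ℝ) - (k:ℝ) + (n:ℝ)/2)^2 / (n:ℝ)) := by
      have h3 : Real.exp 1000000 / 1024 * Real.exp (-147456)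
          ≤ Real.exp 1000000 / Real.sqrt n *
            Real.exp (-(1/16) * (2*(j:ℝ) - (m:ℝ) - (k:ℝ) + (n:ℝ)/2)^2 / (n:ℝ)) := by
        gcongr
      have h4 : (1:ℝ) ≤ Real.exp 1000000 / 1024 * Real.exp (-147456) := by
        rw [show Real.exp 1000000 / 1024 * Real.exp (-147456)
            = Real.exp 1000000 * Real.exp (-147456) / 1024 by ring,
          le_div_iff₀ (by norm_num : (0:ℝ) < 1024)]
        linarith
      linarith
    calc ((m.choose j * (n-m).choose (k-j) : ℕ) : ℝ)
        ≤ (n.choose k : ℝ) := hle1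
      _ = 1 * (n.choose k : ℝ) := (one_mul _).symm
      _ ≤ Real.exp 1000000 / Real.sqrt n *
            Real.exp (-(1/16) * (2*(j:ℝ) - (m:ℝ) - (k:ℝ) + (n:ℝ)/2)^2 / (n:ℝ))
            * (n.choose k : ℝ) :=
          mul_le_mul_of_nonneg_right hRHS1 hchoosepos.le
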